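/- A sequence of real numbers (with ∞ allowed) λ₁,…,λₙ satisfies λᵢ ≥ min(λᵢ₋₁, λᵢ₊₁) for all i (with λ₀ = λₙ₊₁ = ∞) if and only if there exist x₁,…,xₙ₋₁ in ℝ ∪ {∞} such that λᵢ = min(xᵢ, xᵢ₋₁) for every i (with x₀ = xₙ = ∞). -/
import Mathlib


/-- A sequence `λ₁,…,λₙ` in `ℝ ∪ {∞}` (with the conventions
`λ₀ = λₙ₊₁ = ∞`) satisfies `λᵢ ≥ min (λᵢ₋₁, λᵢ₊₁)` for all `i ∈ [1,n]` iff there exist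
`x₁,…,xₙ₋₁` in `ℝ ∪ {∞}` (with `x₀ = xₙ = ∞`) such that `λᵢ = min (xᵢ, xᵢ₋₁)` for all `i`. -/
theorem stmt0 (n : ℕ) (lam : ℕ → WithTop ℝ)
    (h0 : lam 0 = ⊤) (htop : lam (n + 1) = ⊤) :
    (∀ i, 1 ≤ i → i ≤ n → min (lam (i - 1)) (lam (i + 1)) ≤ lam i) ↔
      ∃ x : ℕ → WithTop ℝ, x 0 = ⊤ ∧ x n = ⊤ ∧
        ∀ i, 1 ≤ i → i ≤ n → lam i = min (x i) (x (i - 1)) := by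
  constructor
  · intro h
    refine ⟨fun i => max (lam i) (lam (i + 1)), by simp [h0], by simp [htop], ?_⟩
    intro i h1 h2
    have hi : i - 1 + 1 = i := Nat.succ_pred_eq_of_pos h1
    simp only [hi]
    refine le_antisymm (le_min (le_max_left _ _) (le_max_right _ _)) ?_
    rcases min_le_iff.mp (h i h1 h2) with hle | hle
    · exact min_le_of_right_le (max_le hle le_rfl)
    · exact min_le_of_left_le (max_le le_rfl hle)
  · rintro ⟨x, hx0, hxn, hx⟩
    intro i h1 h2
    rw [hx i h1 h2]
    refine le_min ?_ ?_
    · rcases eq_or_lt_of_le h2 with h | h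
      · subst h
        exact hxn ▸ le_top
      · have : lam (i + 1) = min (x (i + 1)) (x (i + 1 - 1)) :=
          hx (i + 1) (by omega) (by omega)
        simp only [Nat.add_sub_cancel] at this
        exact min_le_of_right_le (this ▸ min_le_right _ _)
    · rcases eq_or_lt_of_le h1 with h | h
      · have hz : i - 1 = 0 := by omega
        rw [hz, hx0]
        exact le_top
      · have : lam (i - 1) = min (x (i - 1)) (x (i - 1 - 1)) :=
          hx (i - 1) (by omega) (by omega)
        exact min_le_of_left_le (this ▸ min_le_left _ _)
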